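/- Let k be a field, n a natural number, and W a Lagrangian subspace of k^n ⊕ k^n with respect to the standard symplectic form ω. Then there exists a linear equivalence g : k^n ⊕ k^n ≃ k^n ⊕ k^n preserving ω (i.e. ω(g u, g v) = ω(u,v) for all u,v) such that W is the image under g of the standard Lagrangian subspace {(x, 0) : x ∈ k^n}. That is, every Lagrangian subspace can be reduced to the standard one by a symplectomorphism. -/

import Mathlib

namespace Statement13

variable {k : Type*} [Field k]

/-- Dot product on `k^n`. -/
def dot {n : ℕ} (x y : Fin n → k) : k := ∑ i, x i * y i

/-- The standard symplectic form on `k^n ⊕ k^n`: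
`ω((x,z),(x',z')) = ⟨x,z'⟩ − ⟨z,x'⟩`. -/
def sf {n : ℕ} (v w : (Fin n → k) × (Fin n → k)) : k :=
  dot v.1 w.2 - dot v.2 w.1

section Aux

variable {n : ℕ}

lemma dot_comm (x y : Fin n → k) : dot x y = dot y x :=
  Finset.sum_congr rfl fun i _ => mul_comm _ _

lemma dot_add_left (x x' y : Fin n → k) : dot (x + x') y = dot x y + dot x' y := by
  simp [dot, add_mul, Finset.sum_add_distrib]

lemma dot_smul_left (c : k) (x y : Fin n → k) : dot (c • x) y = c * dot x y := by
  simp [dot, Finset.mul_sum, mul_assoc]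

lemma dot_add_right (x y y' : Fin n → k) : dot x (y + y') = dot x y + dot x y' := by
  rw [dot_comm, dot_add_left, dot_comm y x, dot_comm y' x]

lemma dot_smul_right (c : k) (x y : Fin n → k) : dot x (c • y) = c * dot x y := by
  rw [dot_comm, dot_smul_left, dot_comm y x]

lemma dot_zero_left (y : Fin n → k) : dot (0 : Fin n → k) y = 0 := by simp [dot]

lemma dot_zero_right (x : Fin n → k) : dot x (0 : Fin n → k) = 0 := by simp [dot]

lemma dot_single_right (x : Fin n → k) (i : Fin n) : dot x (Pi.single i 1) = x i := by
  classical
  simp [dot, Pi.single_apply, mul_ite, Finset.sum_ite_eq']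

/-- The standard symplectic form as a bilinear form. -/
noncomputable def B (k : Type*) [Field k] (n : ℕ) :
    LinearMap.BilinForm k ((Fin n → k) × (Fin n → k)) :=
  LinearMap.mk₂ k sf
    (fun u v w => by
      simp only [sf, Prod.fst_add, Prod.snd_add, dot_add_left]; ring)
    (fun c u w => by
      simp only [sf, Prod.smul_fst, Prod.smul_snd, dot_smul_left, smul_eq_mul]; ring)
    (fun u v w => by
      simp only [sf, Prod.fst_add, Prod.snd_add, dot_add_right]; ring)
    (fun c u w => by
      simp only [sf, Prod.smul_fst, Prod.smul_snd, dot_smul_right, smul_eq_mul]; ring)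

lemma B_apply (v w : (Fin n → k) × (Fin n → k)) : B k n v w = sf v w := rfl

lemma B_isAlt : (B k n).IsAlt := fun v => by
  simp [B_apply, sf, dot_comm v.1 v.2]

lemma B_nondeg : (B k n).Nondegenerate := by
  refine (LinearMap.IsRefl.nondegenerate_iff_separatingLeft (B := B k n) (B_isAlt (k := k) (n := n)).isRefl).mpr ?_
  intro v h
  have h1 : v.1 = 0 := by
    funext i
    have := h (0, Pi.single i 1)
    simpa [B_apply, sf, dot_single_right, dot_zero_right] using this
  have h2 : v.2 = 0 := by
    funext i
    have := h (Pi.single i 1, 0)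
    simpa [B_apply, sf, dot_single_right, dot_zero_right, sub_eq_zero, eq_comm] using this
  exact Prod.ext h1 h2

end Aux

/-- Every Lagrangian subspace of `k^n ⊕ k^n` is the image of the standard
Lagrangian subspace `{(x, 0) : x ∈ k^n}` under a linear symplectomorphism. -/
theorem statement13 (n : ℕ) (W : Submodule k ((Fin n → k) × (Fin n → k)))
    (hW : ∀ v : (Fin n → k) × (Fin n → k), v ∈ W ↔ ∀ w ∈ W, sf v w = 0) :
    ∃ g : ((Fin n → k) × (Fin n → k)) ≃ₗ[k] ((Fin n → k) × (Fin n → k)),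
      (∀ u v : (Fin n → k) × (Fin n → k), sf (g u) (g v) = sf u v) ∧
        (W : Set ((Fin n → k) × (Fin n → k))) =
          ⇑g '' {p : (Fin n → k) × (Fin n → k) | p.2 = 0} := by
  classical
  have halt : (B k n).IsAlt := B_isAlt
  have hrefl : (B k n).IsRefl := halt.isRefl
  have hnd : (B k n).Nondegenerate := B_nondeg
  have hanti : ∀ x y, B k n x y = - B k n y x := fun x y => (LinearMap.IsAlt.neg halt y x).symm
  have hW' : ∀ v : (Fin n → k) × (Fin n → k), v ∈ W ↔ ∀ w ∈ W, B k n v w = 0 := hW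
  have hVdim : Module.finrank k ((Fin n → k) × (Fin n → k)) = n + n := by
    simp [Module.finrank_prod, Module.finrank_fin_fun]
  -- W is its own orthogonal complement
  have horth : (B k n).orthogonal W = W := by
    ext v
    rw [LinearMap.BilinForm.mem_orthogonal_iff, hW' v]
    constructor
    · intro h w hw; exact hrefl _ _ (h w hw)
    · intro h w hw; exact hrefl _ _ (h w hw)
  have hWn : Module.finrank k W = n := by
    have h1 := LinearMap.BilinForm.finrank_orthogonal hnd W
    rw [horth, hVdim] at h1
    have h2 : Module.finrank k W ≤ n + n := hVdim ▸ Submodule.finrank_le W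
    omega
  -- a basis of W
  let eW : Module.Basis (Fin n) k W := (Module.finBasis k W).reindex (finCongr hWn)
  let e : Fin n → (Fin n → k) × (Fin n → k) := fun i => (eW i : (Fin n → k) × (Fin n → k))
  have heW : ∀ i, e i ∈ W := fun i => (eW i).2
  have hBmem : ∀ v ∈ W, ∀ w ∈ W, B k n v w = 0 := fun v hv => (hW' v).1 hv
  have hrepr : ∀ w (hw : w ∈ W), w = ∑ i, eW.repr ⟨w, hw⟩ i • e i := by
    intro w hw
    have h2 := congrArg (Subtype.val) (eW.sum_repr ⟨w, hw⟩)
    simp only [Submodule.coe_sum, Submodule.coe_smul] at h2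
    exact h2.symm
  -- the evaluation map against the basis of W
  let π : ((Fin n → k) × (Fin n → k)) →ₗ[k] (Fin n → k) :=
    LinearMap.pi fun i => B k n (e i)
  have hker : LinearMap.ker π = W := by
    ext v
    simp only [LinearMap.mem_ker, π, LinearMap.pi_apply, funext_iff, Pi.zero_apply]
    constructor
    · intro h
      rw [hW' v]
      intro w hw
      rw [hrepr w hw, map_sum]
      refine Finset.sum_eq_zero fun i _ => ?_
      rw [map_smul, smul_eq_mul, hanti v (e i), h i]
      ring
    · intro hv i
      exact hrefl _ _ (hBmem v hv _ (heW i))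
  have hr : LinearMap.range π = ⊤ := by
    apply Submodule.eq_top_of_finrank_eq
    have h1 := π.finrank_range_add_finrank_ker
    rw [hker, hWn, hVdim] at h1
    rw [Module.finrank_fin_fun]
    omega
  have hfex : ∀ i : Fin n, ∃ u, π u = Pi.single i 1 := fun i => by
    have : Pi.single i 1 ∈ LinearMap.range π := by rw [hr]; trivial
    exact this
  choose f hfπ using hfex
  have hBef : ∀ j i, B k n (e j) (f i) = (Pi.single i 1 : Fin n → k) j := fun j i => by
    have := congrFun (hfπ i) j
    simpa [π] using this
  have hBfe : ∀ i m, B k n (f i) (e m) = -((Pi.single i 1 : Fin n → k) m) := fun i m => by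
    rw [hanti, hBef]
  -- correct f to make its span isotropic
  let a : Fin n → Fin n → k := fun i j => if j < i then B k n (f i) (f j) else 0
  let f' : Fin n → (Fin n → k) × (Fin n → k) := fun i => f i - ∑ j, a i j • e j
  have hBef' : ∀ j i, B k n (e j) (f' i) = (Pi.single i 1 : Fin n → k) j := by
    intro j i
    simp only [f', map_sub, map_sum, map_smul, smul_eq_mul]
    rw [hBef]
    have : ∀ m ∈ Finset.univ, a i m * B k n (e j) (e m) = 0 := fun m _ => by
      rw [hBmem _ (heW j) _ (heW m), mul_zero]
    rw [Finset.sum_congr rfl this, Finset.sum_const_zero, sub_zero]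
  have hstepl : ∀ i u, B k n (f' i) u = B k n (f i) u - ∑ l, a i l * B k n (e l) u := by
    intro i u
    simp only [f', map_sub, map_sum, map_smul, LinearMap.sub_apply, LinearMap.sum_apply,
      LinearMap.smul_apply, smul_eq_mul]
  have hBff : ∀ i j, B k n (f' i) (f' j) = 0 := by
    intro i j
    rw [hstepl i (f' j)]
    have hs1 : ∑ l, a i l * B k n (e l) (f' j) = a i j := by
      simp [hBef', Pi.single_apply, mul_ite, Finset.sum_ite_eq']
    rw [hs1]
    have hs2 : B k n (f i) (f' j) = B k n (f i) (f j) + a j i := by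
      simp only [f', map_sub, map_sum, map_smul, smul_eq_mul]
      have : ∀ m ∈ Finset.univ, a j m * B k n (f i) (e m) = a j m * -((Pi.single i 1 : Fin n → k) m) :=
        fun m _ => by rw [hBfe]
      rw [Finset.sum_congr rfl this]
      simp [Pi.single_apply, mul_ite, Finset.sum_ite_eq']
    rw [hs2]
    rcases lt_trichotomy i j with hij | hij | hij
    · have hai : a i j = 0 := by simp [a, not_lt.mpr hij.le]
      have haj : a j i = B k n (f j) (f i) := by simp [a, hij]
      rw [hai, haj, hanti (f j) (f i)]
      ring
    · subst hij
      have hai : a i i = 0 := by simp [a]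
      rw [hai, halt (f i)]
      ring
    · have hai : a i j = B k n (f i) (f j) := by simp [a, hij]
      have haj : a j i = 0 := by simp [a, not_lt.mpr hij.le]
      rw [hai, haj]
      ring
  -- the standard basis of k^n × k^n
  let b₀ : Module.Basis (Fin n ⊕ Fin n) k ((Fin n → k) × (Fin n → k)) :=
    (Pi.basisFun k (Fin n)).prod (Pi.basisFun k (Fin n))
  have hb₀l : ∀ i, b₀ (Sum.inl i) = (Pi.single i 1, 0) := fun i => by
    refine Prod.ext ?_ ?_
    · rw [Module.Basis.prod_apply_inl_fst, Pi.basisFun_apply]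
    · rw [Module.Basis.prod_apply_inl_snd]
  have hb₀r : ∀ i, b₀ (Sum.inr i) = (0, Pi.single i 1) := fun i => by
    refine Prod.ext ?_ ?_
    · rw [Module.Basis.prod_apply_inr_fst]
    · rw [Module.Basis.prod_apply_inr_snd, Pi.basisFun_apply]
  let g0 : ((Fin n → k) × (Fin n → k)) →ₗ[k] ((Fin n → k) × (Fin n → k)) :=
    b₀.constr k (Sum.elim e f')
  have hg0 : ∀ s, g0 (b₀ s) = Sum.elim e f' s := fun s => b₀.constr_basis k _ s
  -- g0 preserves the symplectic form
  have hcomp : (B k n).compl₁₂ g0 g0 = B k n := by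
    apply LinearMap.ext_basis b₀ b₀
    intro i j
    rw [LinearMap.compl₁₂_apply, hg0, hg0]
    rcases i with i | i <;> rcases j with j | j
    · rw [hb₀l, hb₀l]
      simp only [Sum.elim_inl]
      rw [hBmem _ (heW i) _ (heW j), B_apply]
      simp [sf, dot_zero_left, dot_zero_right]
    · rw [hb₀l, hb₀r]
      simp only [Sum.elim_inl, Sum.elim_inr]
      rw [hBef' i j, B_apply]
      simp [sf, dot_single_right, dot_zero_left, dot_zero_right, Pi.single_apply, eq_comm]
    · rw [hb₀r, hb₀l]
      simp only [Sum.elim_inl, Sum.elim_inr]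
      rw [hanti, hBef' j i, B_apply]
      simp [sf, dot_single_right, dot_zero_left, dot_zero_right]
    · rw [hb₀r, hb₀r]
      simp only [Sum.elim_inr]
      rw [hBff, B_apply]
      simp [sf, dot_zero_left, dot_zero_right]
  have hpres : ∀ u v, B k n (g0 u) (g0 v) = B k n u v := by
    intro u v
    have h1 := DFunLike.congr_fun (DFunLike.congr_fun hcomp u) v
    simpa [LinearMap.compl₁₂_apply] using h1
  -- g0 is bijective
  have hinj : Function.Injective g0 := by
    rw [← LinearMap.ker_eq_bot]
    rw [LinearMap.ker_eq_bot']
    intro v hv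
    apply hnd.1
    intro u
    have := hpres v u
    rw [hv] at this
    simpa using this.symm
  have hsurj : Function.Surjective g0 := LinearMap.injective_iff_surjective.mp hinj
  let g := LinearEquiv.ofBijective g0 ⟨hinj, hsurj⟩
  -- g applied to (c, 0)
  have hsingle : ∀ c : Fin n → k, c = ∑ i, c i • (Pi.single i 1 : Fin n → k) := by
    intro c
    funext j
    simp [Finset.sum_apply, Pi.single_apply, mul_ite, Finset.sum_ite_eq]
  have hg0pair : ∀ c : Fin n → k, g0 (c, (0 : Fin n → k)) = ∑ i, c i • e i := by
    intro c
    have h1 : ((c, (0 : Fin n → k)) : (Fin n → k) × (Fin n → k)) =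
        ∑ i, c i • b₀ (Sum.inl i) := by
      refine Prod.ext ?_ ?_
      · simp only [hb₀l, Prod.smul_mk, smul_zero]
        rw [Prod.fst_sum]
        exact hsingle c
      · simp only [hb₀l, Prod.smul_mk, smul_zero]
        rw [Prod.snd_sum]
        simp
    rw [h1, map_sum]
    simp only [map_smul, hg0, Sum.elim_inl]
  refine ⟨g, ?_, ?_⟩
  · intro u v
    have := hpres u v
    exact this
  · ext v
    simp only [SetLike.mem_coe, Set.mem_image, Set.mem_setOf_eq]
    constructor
    · intro hv
      refine ⟨((fun i => eW.repr ⟨v, hv⟩ i), 0), rfl, ?_⟩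
      show g0 _ = v
      rw [hg0pair]
      exact (hrepr v hv).symm
    · rintro ⟨p, hp2, rfl⟩
      have hp : p = (p.1, (0 : Fin n → k)) := Prod.ext rfl hp2
      show g0 p ∈ W
      rw [hp, hg0pair]
      exact Submodule.sum_mem _ fun i _ => Submodule.smul_mem _ _ (heW i)

end Statement13
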